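/- Assume in addition k > 3/ε. Then ι_ε^k(u) = 1/ε for every u ∈ (2/k, ε − 1/k], and ι_ε^k(u) = 0 for every u ∈ (ε + 1/k, 1]. In particular, ι_ε^k differs from ι_ε = ε^{−1} 1_{[0,ε]} only on the set (0, 2/k] ∪ (ε − 1/k, ε + 1/k]. -/

import Mathlib

open MeasureTheory Set

/-- `g_ε^{k,+}(z) = k[1_{(0,1/k]}(z) − 1_{(1/k,2/k]}(z)]`. -/
noncomputable def gPlus (k : ℕ) (z : ℝ) : ℝ :=
  (k:ℝ) * ((Set.Ioc (0:ℝ) (1/(k:ℝ))).indicator (fun _ => (1:ℝ)) z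
    - (Set.Ioc (1/(k:ℝ)) (2/(k:ℝ))).indicator (fun _ => (1:ℝ)) z)

/-- `g_ε^{k,−}(z) = k[1_{(ε−1/k,ε]}(z) − 1_{(ε,ε+1/k]}(z)]`. -/
noncomputable def gMinus (ε : ℝ) (k : ℕ) (z : ℝ) : ℝ :=
  (k:ℝ) * ((Set.Ioc (ε - 1/(k:ℝ)) ε).indicator (fun _ => (1:ℝ)) z
    - (Set.Ioc ε (ε + 1/(k:ℝ))).indicator (fun _ => (1:ℝ)) z)

/-- The normalizing constant `c_ε^{k,+}`. -/
noncomputable def cPlus (W : StieltjesFunction ℝ) (ε : ℝ) (k : ℕ) : ℝ :=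
  ε⁻¹ * (∫ y in Set.Ioc (0:ℝ) 1, (∫ z in (0:ℝ)..y, gPlus k z) ∂W.measure)⁻¹

/-- The normalizing constant `c_ε^{k,−}`. -/
noncomputable def cMinus (W : StieltjesFunction ℝ) (ε : ℝ) (k : ℕ) : ℝ :=
  ε⁻¹ * (∫ y in Set.Ioc (0:ℝ) 1, (∫ z in (0:ℝ)..y, gMinus ε k z) ∂W.measure)⁻¹

/-- `g_ε^k = c_ε^{k,+} g_ε^{k,+} − c_ε^{k,−} g_ε^{k,−}`. -/
noncomputable def gEpsK (W : StieltjesFunction ℝ) (ε : ℝ) (k : ℕ) (z : ℝ) : ℝ :=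
  cPlus W ε k * gPlus k z - cMinus W ε k * gMinus ε k z

/-- `ι_ε^k(u) = ∫_{(0,u]} (∫₀^y g_ε^k(z) dz) W(dy)`. -/
noncomputable def iotaK (W : StieltjesFunction ℝ) (ε : ℝ) (k : ℕ) (u : ℝ) : ℝ :=
  ∫ y in Set.Ioc (0:ℝ) u, (∫ z in (0:ℝ)..y, gEpsK W ε k z) ∂W.measure

/-- The approximation of the identity `ι_ε = ε⁻¹ 1_{[0,ε]}`. -/
noncomputable def iotaEps (ε : ℝ) (y : ℝ) : ℝ :=
  ε⁻¹ * (Set.Icc (0:ℝ) ε).indicator (fun _ => (1:ℝ)) y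

lemma toReal_ofReal_max (x : ℝ) : (ENNReal.ofReal x).toReal = max x 0 := by
  rcases le_total x 0 with h | h
  · simp [ENNReal.ofReal_eq_zero.2 h, max_eq_right h]
  · simp [ENNReal.toReal_ofReal h, max_eq_left h]

lemma intInd (a b c d : ℝ) :
    IntervalIntegrable ((Set.Ioc a b).indicator (fun _ => (1:ℝ))) volume c d :=
  ((integrable_indicator_iff measurableSet_Ioc).2
    (integrableOn_const measure_Ioc_lt_top.ne)).intervalIntegrable

lemma integral_ind (a b y : ℝ) (hy : 0 ≤ y) :
    (∫ z in (0:ℝ)..y, (Set.Ioc a b).indicator (fun _ => (1:ℝ)) z)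
      = max (min b y - max a 0) 0 := by
  rw [intervalIntegral.integral_of_le hy,
    MeasureTheory.integral_indicator measurableSet_Ioc, setIntegral_const, measureReal_def,
    Measure.restrict_apply measurableSet_Ioc, Set.Ioc_inter_Ioc,
    Real.volume_Ioc, smul_eq_mul, mul_one, toReal_ofReal_max]

/-- explicit primitive of `gPlus` -/
noncomputable def Fp (k : ℕ) (y : ℝ) : ℝ :=
  (k:ℝ) * (max (min (1/(k:ℝ)) y - max 0 0) 0 - max (min (2/(k:ℝ)) y - max (1/(k:ℝ)) 0) 0)

/-- explicit primitive of `gMinus` -/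
noncomputable def Fm (ε : ℝ) (k : ℕ) (y : ℝ) : ℝ :=
  (k:ℝ) * (max (min ε y - max (ε - 1/(k:ℝ)) 0) 0 - max (min (ε + 1/(k:ℝ)) y - max ε 0) 0)

lemma gPlus_intInt (k : ℕ) (c d : ℝ) : IntervalIntegrable (gPlus k) volume c d := by
  have : gPlus k = fun z => (k:ℝ) * ((Set.Ioc (0:ℝ) (1/(k:ℝ))).indicator (fun _ => (1:ℝ)) z
      - (Set.Ioc (1/(k:ℝ)) (2/(k:ℝ))).indicator (fun _ => (1:ℝ)) z) := rfl
  rw [this]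
  exact (((intInd _ _ c d).sub (intInd _ _ c d)).const_mul _)

lemma gMinus_intInt (ε : ℝ) (k : ℕ) (c d : ℝ) : IntervalIntegrable (gMinus ε k) volume c d := by
  have : gMinus ε k = fun z => (k:ℝ) * ((Set.Ioc (ε - 1/(k:ℝ)) ε).indicator (fun _ => (1:ℝ)) z
      - (Set.Ioc ε (ε + 1/(k:ℝ))).indicator (fun _ => (1:ℝ)) z) := rfl
  rw [this]
  exact (((intInd _ _ c d).sub (intInd _ _ c d)).const_mul _)

lemma prim_gPlus (k : ℕ) (y : ℝ) (hy : 0 ≤ y) :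
    ∫ z in (0:ℝ)..y, gPlus k z = Fp k y := by
  simp only [gPlus, Fp]
  rw [intervalIntegral.integral_const_mul,
    intervalIntegral.integral_sub (intInd _ _ _ _) (intInd _ _ _ _),
    integral_ind _ _ _ hy, integral_ind _ _ _ hy]

lemma prim_gMinus (ε : ℝ) (k : ℕ) (y : ℝ) (hy : 0 ≤ y) :
    ∫ z in (0:ℝ)..y, gMinus ε k z = Fm ε k y := by
  simp only [gMinus, Fm]
  rw [intervalIntegral.integral_const_mul,
    intervalIntegral.integral_sub (intInd _ _ _ _) (intInd _ _ _ _),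
    integral_ind _ _ _ hy, integral_ind _ _ _ hy]

section props
variable {k : ℕ} {ε y : ℝ}

lemma Fp_factor (hk0 : 0 < (k:ℝ)) :
    Fp k y = (k:ℝ) * (max (min (1/(k:ℝ)) y) 0 - max (min (1/(k:ℝ) + 1/(k:ℝ)) y - 1/(k:ℝ)) 0) := by
  have h1 : 0 < 1/(k:ℝ) := one_div_pos.mpr hk0
  rw [Fp, max_self, max_eq_left h1.le, show (2:ℝ)/(k:ℝ) = 1/(k:ℝ) + 1/(k:ℝ) by ring, sub_zero]

lemma Fm_factor (hk0 : 0 < (k:ℝ)) (hεk : 1/(k:ℝ) < ε) :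
    Fm ε k y = (k:ℝ) * (max (min ε y - (ε - 1/(k:ℝ))) 0 - max (min (ε + 1/(k:ℝ)) y - ε) 0) := by
  have h1 : 0 < 1/(k:ℝ) := one_div_pos.mpr hk0
  rw [Fm, max_eq_left (by linarith : (0:ℝ) ≤ ε - 1/(k:ℝ)), max_eq_left (by linarith : (0:ℝ) ≤ ε)]

lemma Fp_nonneg (hk0 : 0 < (k:ℝ)) (hy : 0 ≤ y) : 0 ≤ Fp k y := by
  have h1 : 0 < 1/(k:ℝ) := one_div_pos.mpr hk0
  rw [Fp_factor hk0]
  apply mul_nonneg hk0.le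
  simp only [min_def, max_def]; split_ifs <;> linarith

lemma Fp_eq_zero (hk0 : 0 < (k:ℝ)) (hy : 2/(k:ℝ) ≤ y) : Fp k y = 0 := by
  have h1 : 0 < 1/(k:ℝ) := one_div_pos.mpr hk0
  rw [show y = y by rfl] at hy
  have hy' : 1/(k:ℝ) + 1/(k:ℝ) ≤ y := by rw [show (1:ℝ)/(k:ℝ) + 1/(k:ℝ) = 2/(k:ℝ) by ring]; exact hy
  rw [Fp_factor hk0]
  have : max (min (1/(k:ℝ)) y) 0 - max (min (1/(k:ℝ) + 1/(k:ℝ)) y - 1/(k:ℝ)) 0 = 0 := by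
    simp only [min_def, max_def]; split_ifs <;> linarith
  rw [this, mul_zero]

lemma Fp_pos (hk0 : 0 < (k:ℝ)) (hy : y ∈ Set.Ioc 0 (1/(k:ℝ))) : 0 < Fp k y := by
  have h1 : 0 < 1/(k:ℝ) := one_div_pos.mpr hk0
  obtain ⟨hy1, hy2⟩ := hy
  rw [Fp_factor hk0]
  apply mul_pos hk0
  have e1 : min (1/(k:ℝ)) y = y := min_eq_right hy2
  have e2 : min (1/(k:ℝ) + 1/(k:ℝ)) y - 1/(k:ℝ) ≤ 0 := by
    rcases min_le_right (1/(k:ℝ) + 1/(k:ℝ)) y with h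
    linarith
  rw [e1, max_eq_left hy1.le, max_eq_right e2]
  linarith

lemma Fm_nonneg (hk0 : 0 < (k:ℝ)) (hεk : 1/(k:ℝ) < ε) (hy : 0 ≤ y) : 0 ≤ Fm ε k y := by
  have h1 : 0 < 1/(k:ℝ) := one_div_pos.mpr hk0
  rw [Fm_factor hk0 hεk]
  apply mul_nonneg hk0.le
  simp only [min_def, max_def]; split_ifs <;> linarith

lemma Fm_eq_zero_left (hk0 : 0 < (k:ℝ)) (hεk : 1/(k:ℝ) < ε) (hy0 : 0 ≤ y)
    (hy : y ≤ ε - 1/(k:ℝ)) : Fm ε k y = 0 := by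
  have h1 : 0 < 1/(k:ℝ) := one_div_pos.mpr hk0
  rw [Fm_factor hk0 hεk]
  have : max (min ε y - (ε - 1/(k:ℝ))) 0 - max (min (ε + 1/(k:ℝ)) y - ε) 0 = 0 := by
    simp only [min_def, max_def]; split_ifs <;> linarith
  rw [this, mul_zero]

lemma Fm_eq_zero_right (hk0 : 0 < (k:ℝ)) (hεk : 1/(k:ℝ) < ε)
    (hy : ε + 1/(k:ℝ) ≤ y) : Fm ε k y = 0 := by
  have h1 : 0 < 1/(k:ℝ) := one_div_pos.mpr hk0
  rw [Fm_factor hk0 hεk]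
  have : max (min ε y - (ε - 1/(k:ℝ))) 0 - max (min (ε + 1/(k:ℝ)) y - ε) 0 = 0 := by
    simp only [min_def, max_def]; split_ifs <;> linarith
  rw [this, mul_zero]

lemma Fm_pos (hk0 : 0 < (k:ℝ)) (hεk : 1/(k:ℝ) < ε)
    (hy : y ∈ Set.Ioc (ε - 1/(k:ℝ)) ε) : 0 < Fm ε k y := by
  have h1 : 0 < 1/(k:ℝ) := one_div_pos.mpr hk0
  obtain ⟨hy1, hy2⟩ := hy
  rw [Fm_factor hk0 hεk]
  apply mul_pos hk0
  have e1 : min ε y = y := min_eq_right hy2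
  have e2 : min (ε + 1/(k:ℝ)) y - ε ≤ 0 := by
    rcases min_le_right (ε + 1/(k:ℝ)) y with h
    linarith
  rw [e1, max_eq_left (by linarith : (0:ℝ) ≤ y - (ε - 1/(k:ℝ))), max_eq_right e2]
  linarith

lemma Fp_continuous (k : ℕ) : Continuous (Fp k) := by
  unfold Fp; fun_prop

lemma Fm_continuous (ε : ℝ) (k : ℕ) : Continuous (Fm ε k) := by
  unfold Fm; fun_prop

end props

lemma prim_gEpsK (W : StieltjesFunction ℝ) (ε : ℝ) (k : ℕ) (y : ℝ) (hy : 0 ≤ y) :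
    ∫ z in (0:ℝ)..y, gEpsK W ε k z
      = cPlus W ε k * Fp k y - cMinus W ε k * Fm ε k y := by
  simp only [gEpsK]
  rw [intervalIntegral.integral_sub ((gPlus_intInt k 0 y).const_mul _)
      ((gMinus_intInt ε k 0 y).const_mul _),
    intervalIntegral.integral_const_mul, intervalIntegral.integral_const_mul,
    prim_gPlus k y hy, prim_gMinus ε k y hy]

lemma iotaK_repr (W : StieltjesFunction ℝ) (ε : ℝ) (k : ℕ) (u : ℝ) :
    iotaK W ε k u = cPlus W ε k * (∫ y in Set.Ioc (0:ℝ) u, Fp k y ∂W.measure)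
      - cMinus W ε k * (∫ y in Set.Ioc (0:ℝ) u, Fm ε k y ∂W.measure) := by
  rw [iotaK, setIntegral_congr_fun measurableSet_Ioc
      (fun y hy => prim_gEpsK W ε k y (le_of_lt hy.1)),
    integral_sub (((Fp_continuous k).integrableOn_Ioc).const_mul _)
      (((Fm_continuous ε k).integrableOn_Ioc).const_mul _),
    integral_const_mul, integral_const_mul]

/-- if moreover `k > 3/ε`, then `ι_ε^k = 1/ε` on `(2/k, ε−1/k]`, `ι_ε^k = 0` on
`(ε+1/k, 1]`, and `ι_ε^k` agrees with `ι_ε` on `(0,1]` outside `(0,2/k] ∪ (ε−1/k, ε+1/k]`. -/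
theorem iotaK_eq_iotaEps_outside (W : StieltjesFunction ℝ) (hW : StrictMono W)
    (hWper : ∀ u : ℝ, W (u + 1) - W u = W 1 - W 0)
    (ε : ℝ) (hε : ε ∈ Set.Ioo (0:ℝ) 1) (k : ℕ) (hk : 1/ε < (k:ℝ)) (hk1 : ε + 1/(k:ℝ) < 1)
    (hk3 : 3/ε < (k:ℝ)) :
    (∀ u ∈ Set.Ioc (2/(k:ℝ)) (ε - 1/(k:ℝ)), iotaK W ε k u = 1/ε) ∧
    (∀ u ∈ Set.Ioc (ε + 1/(k:ℝ)) 1, iotaK W ε k u = 0) ∧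
    (∀ u ∈ Set.Ioc (0:ℝ) 1,
      u ∉ Set.Ioc (0:ℝ) (2/(k:ℝ)) ∪ Set.Ioc (ε - 1/(k:ℝ)) (ε + 1/(k:ℝ)) →
        iotaK W ε k u = iotaEps ε u) := by
  obtain ⟨hε0, hε1⟩ := hε
  have hεinv : (1:ℝ) < 1/ε := by rw [lt_div_iff₀ hε0]; linarith
  have hk0 : 0 < (k:ℝ) := lt_trans (by linarith) hk
  have h1k : 0 < 1/(k:ℝ) := one_div_pos.mpr hk0
  have hεk : 1/(k:ℝ) < ε := by
    rw [div_lt_iff₀ hε0] at hk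
    rw [div_lt_iff₀ hk0]
    nlinarith
  have h3k : 3/(k:ℝ) < ε := by
    rw [div_lt_iff₀ hε0] at hk3
    rw [div_lt_iff₀ hk0]
    nlinarith
  have h1k1 : 1/(k:ℝ) ≤ 1 := by
    rw [div_le_one hk0]
    exact le_of_lt (lt_trans hεinv hk)
  -- the normalized integrals
  set A : ℝ := ∫ y in Set.Ioc (0:ℝ) 1, Fp k y ∂W.measure with hA
  set B : ℝ := ∫ y in Set.Ioc (0:ℝ) 1, Fm ε k y ∂W.measure with hB
  have hcP : cPlus W ε k = ε⁻¹ * A⁻¹ := by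
    rw [cPlus, setIntegral_congr_fun measurableSet_Ioc
      (fun y hy => prim_gPlus k y (le_of_lt hy.1))]
  have hcM : cMinus W ε k = ε⁻¹ * B⁻¹ := by
    rw [cMinus, setIntegral_congr_fun measurableSet_Ioc
      (fun y hy => prim_gMinus ε k y (le_of_lt hy.1))]
  have hApos : 0 < A := by
    rw [hA, setIntegral_pos_iff_support_of_nonneg_ae
      ((ae_restrict_iff' measurableSet_Ioc).2
        (ae_of_all _ fun y hy => Fp_nonneg hk0 (le_of_lt hy.1)))
      ((Fp_continuous k).integrableOn_Ioc)]
    refine lt_of_lt_of_le ?_ (measure_mono (fun y hy =>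
      ⟨(Fp_pos hk0 hy).ne', ⟨hy.1, le_trans hy.2 h1k1⟩⟩ :
      Set.Ioc (0:ℝ) (1/(k:ℝ)) ⊆ Function.support (Fp k) ∩ Set.Ioc 0 1))
    rw [W.measure_Ioc]
    exact ENNReal.ofReal_pos.2 (sub_pos.2 (hW h1k))
  have hBpos : 0 < B := by
    rw [hB, setIntegral_pos_iff_support_of_nonneg_ae
      ((ae_restrict_iff' measurableSet_Ioc).2
        (ae_of_all _ fun y hy => Fm_nonneg hk0 hεk (le_of_lt hy.1)))
      ((Fm_continuous ε k).integrableOn_Ioc)]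
    refine lt_of_lt_of_le ?_ (measure_mono (fun y hy =>
      ⟨(Fm_pos hk0 hεk hy).ne', ⟨lt_of_le_of_lt (by linarith) hy.1, le_trans hy.2 hε1.le⟩⟩ :
      Set.Ioc (ε - 1/(k:ℝ)) ε ⊆ Function.support (Fm ε k) ∩ Set.Ioc 0 1))
    rw [W.measure_Ioc]
    exact ENNReal.ofReal_pos.2 (sub_pos.2 (hW (by linarith)))
  -- extension lemmas
  have extendFp : ∀ u : ℝ, 2/(k:ℝ) < u → u ≤ 1 →
      (∫ y in Set.Ioc (0:ℝ) u, Fp k y ∂W.measure) = A := by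
    intro u hu hu1
    have h0u : (0:ℝ) ≤ u := le_of_lt (lt_of_le_of_lt (by positivity) hu)
    have hsplit : Set.Ioc (0:ℝ) 1 = Set.Ioc 0 u ∪ Set.Ioc u 1 :=
      (Set.Ioc_union_Ioc_eq_Ioc h0u hu1).symm
    have hzero : (∫ y in Set.Ioc u 1, Fp k y ∂W.measure) = 0 := by
      rw [setIntegral_congr_fun measurableSet_Ioc
        (fun y hy => Fp_eq_zero hk0 (le_of_lt (lt_of_lt_of_le hu (le_of_lt hy.1))) :
          Set.EqOn (Fp k) (fun _ => (0:ℝ)) (Set.Ioc u 1))]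
      simp
    rw [hA, hsplit, setIntegral_union (Set.Ioc_disjoint_Ioc_of_le le_rfl) measurableSet_Ioc
      ((Fp_continuous k).integrableOn_Ioc) ((Fp_continuous k).integrableOn_Ioc), hzero,
      add_zero]
  have extendFm : ∀ u : ℝ, ε + 1/(k:ℝ) < u → u ≤ 1 →
      (∫ y in Set.Ioc (0:ℝ) u, Fm ε k y ∂W.measure) = B := by
    intro u hu hu1
    have h0u : (0:ℝ) ≤ u := le_of_lt (lt_of_le_of_lt (by linarith) hu)
    have hsplit : Set.Ioc (0:ℝ) 1 = Set.Ioc 0 u ∪ Set.Ioc u 1 :=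
      (Set.Ioc_union_Ioc_eq_Ioc h0u hu1).symm
    have hzero : (∫ y in Set.Ioc u 1, Fm ε k y ∂W.measure) = 0 := by
      rw [setIntegral_congr_fun measurableSet_Ioc
        (fun y hy => Fm_eq_zero_right hk0 hεk (le_of_lt (lt_of_lt_of_le hu (le_of_lt hy.1))) :
          Set.EqOn (Fm ε k) (fun _ => (0:ℝ)) (Set.Ioc u 1))]
      simp
    rw [hB, hsplit, setIntegral_union (Set.Ioc_disjoint_Ioc_of_le le_rfl) measurableSet_Ioc
      ((Fm_continuous ε k).integrableOn_Ioc) ((Fm_continuous ε k).integrableOn_Ioc), hzero,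
      add_zero]
  have vanishFm : ∀ u : ℝ, u ≤ ε - 1/(k:ℝ) →
      (∫ y in Set.Ioc (0:ℝ) u, Fm ε k y ∂W.measure) = 0 := by
    intro u hu
    rw [setIntegral_congr_fun measurableSet_Ioc
      (fun y hy => Fm_eq_zero_left hk0 hεk (le_of_lt hy.1) (le_trans hy.2 hu) :
        Set.EqOn (Fm ε k) (fun _ => (0:ℝ)) (Set.Ioc 0 u))]
    simp
  -- the three parts
  have part1 : ∀ u ∈ Set.Ioc (2/(k:ℝ)) (ε - 1/(k:ℝ)), iotaK W ε k u = 1/ε := by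
    intro u hu
    rw [iotaK_repr, extendFp u hu.1 (by linarith [hu.2]), vanishFm u hu.2, mul_zero, sub_zero,
      hcP, mul_assoc, inv_mul_cancel₀ hApos.ne', mul_one, one_div]
  have part2 : ∀ u ∈ Set.Ioc (ε + 1/(k:ℝ)) 1, iotaK W ε k u = 0 := by
    intro u hu
    have h2k : 2/(k:ℝ) = 1/(k:ℝ) + 1/(k:ℝ) := by ring
    rw [iotaK_repr, extendFp u (by linarith [hu.1] : 2/(k:ℝ) < u) hu.2,
      extendFm u hu.1 hu.2, hcP, hcM, mul_assoc, mul_assoc,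
      inv_mul_cancel₀ hApos.ne', inv_mul_cancel₀ hBpos.ne', sub_self]
  refine ⟨part1, part2, ?_⟩
  intro u hu hnot
  simp only [Set.mem_union, Set.mem_Ioc, not_or, not_and, not_le] at hnot
  have h2ku : 2/(k:ℝ) < u := hnot.1 hu.1
  rcases le_or_gt u (ε - 1/(k:ℝ)) with hcase | hcase
  · have hmem : u ∈ Set.Icc (0:ℝ) ε := Set.mem_Icc.mpr ⟨le_of_lt hu.1, by linarith⟩
    rw [part1 u ⟨h2ku, hcase⟩, iotaEps, Set.indicator_of_mem hmem, mul_one, one_div]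
  · have huge : ε + 1/(k:ℝ) < u := hnot.2 hcase
    have hmem : u ∉ Set.Icc (0:ℝ) ε := by
      rw [Set.mem_Icc]; push_neg; intro _; linarith
    rw [part2 u ⟨huge, hu.2⟩, iotaEps, Set.indicator_of_notMem hmem, mul_zero]
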